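/- Let z₀ ∈ ℍ with θ₁ = arg(z₀) and write v = ξe^{iθ} with ξ > 0 and θ₁ + arg(z₀-1) - 2π ≤ θ ≤ θ₁ - π. Then Im(v)/Im(z₀) - 2Re(v/z₀) = ξ·sin(θ - 2θ₁)/Im(z₀) > 0, provided sin(arg(z₀-1) - θ₁) > 0 and sin(π - θ₁) > 0. -/

import Mathlib

open Complex Real

/-- Positivity of the `b`-branch of the Finsler norm on the sector `S_b(z₀)`: with
`θ₁ = arg z₀`, `θ₂ = arg(z₀-1)`, `v = ξ e^{iθ}` where `ξ > 0` and
`θ₁ + θ₂ - 2π ≤ θ ≤ θ₁ - π`, we have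
`Im v/Im z₀ - 2 Re(v/z₀) = ξ sin(θ - 2θ₁)/Im z₀ > 0`, provided `sin(θ₂-θ₁) > 0` and
`sin(π-θ₁) > 0`. -/
theorem b_branch_positive
    (z₀ : ℂ) (hz₀ : 0 < z₀.im)
    (θ₁ θ₂ : ℝ) (hθ₁ : θ₁ = Complex.arg z₀) (hθ₂ : θ₂ = Complex.arg (z₀ - 1))
    (ξ θ : ℝ) (hξ : 0 < ξ)
    (hθlow : θ₁ + θ₂ - 2 * Real.pi ≤ θ) (hθhigh : θ ≤ θ₁ - Real.pi)
    (v : ℂ) (hv : v = (ξ : ℂ) * Complex.exp ((θ : ℂ) * Complex.I))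
    (hsin₁ : 0 < Real.sin (θ₂ - θ₁)) (hsin₂ : 0 < Real.sin (Real.pi - θ₁)) :
    v.im / z₀.im - 2 * (v / z₀).re = ξ * Real.sin (θ - 2 * θ₁) / z₀.im ∧
      0 < v.im / z₀.im - 2 * (v / z₀).re := by
  have hz₀ne : z₀ ≠ 0 := by
    intro h; rw [h] at hz₀; simp at hz₀
  set r : ℝ := ‖z₀‖ with hr
  have hrpos : 0 < r := norm_pos_iff.mpr hz₀ne
  -- arg bounds for θ₁
  have hsinθ₁ : 0 < Real.sin θ₁ := by
    rw [hθ₁, Complex.sin_arg]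
    positivity
  have hθ₁lt : θ₁ < Real.pi := by
    rw [hθ₁]
    exact Complex.arg_lt_pi_iff.2 (Or.inr (ne_of_gt hz₀))
  have hθ₁pos : 0 < θ₁ := by
    by_contra h
    push_neg at h
    have h2 : -Real.pi ≤ θ₁ := by
      rw [hθ₁]; exact (Complex.neg_pi_lt_arg z₀).le
    exact absurd (Real.sin_nonpos_of_nonpos_of_neg_pi_le h h2) (not_le.2 hsinθ₁)
  -- arg bounds for θ₂
  have him1 : 0 < (z₀ - 1).im := by simpa using hz₀
  have hz₁ne : z₀ - 1 ≠ 0 := by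
    intro h; rw [h] at him1; simp at him1
  have hsinθ₂ : 0 < Real.sin θ₂ := by
    rw [hθ₂, Complex.sin_arg]
    exact div_pos him1 (norm_pos_iff.mpr hz₁ne)
  have hθ₂lt : θ₂ < Real.pi := by
    rw [hθ₂]
    exact Complex.arg_lt_pi_iff.2 (Or.inr (ne_of_gt him1))
  have hθ₂pos : 0 < θ₂ := by
    by_contra h
    push_neg at h
    have h2 : -Real.pi ≤ θ₂ := by
      rw [hθ₂]; exact (Complex.neg_pi_lt_arg _).le
    exact absurd (Real.sin_nonpos_of_nonpos_of_neg_pi_le h h2) (not_le.2 hsinθ₂)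
  -- θ₂ - θ₁ > 0
  have hdiffpos : 0 < θ₂ - θ₁ := by
    by_contra h
    push_neg at h
    have h2 : -Real.pi ≤ θ₂ - θ₁ := by linarith
    exact absurd (Real.sin_nonpos_of_nonpos_of_neg_pi_le h h2) (not_le.2 hsin₁)
  -- components
  have him : z₀.im = r * Real.sin θ₁ := by
    rw [hθ₁, Complex.sin_arg, hr]
    field_simp
  have hre : z₀.re = r * Real.cos θ₁ := by
    rw [hθ₁, hr, Complex.cos_arg hz₀ne]
    field_simp
  have hvim : v.im = ξ * Real.sin θ := by
    simp [hv, Complex.mul_im, Complex.exp_ofReal_mul_I_re, Complex.exp_ofReal_mul_I_im]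
  have hvre : v.re = ξ * Real.cos θ := by
    simp [hv, Complex.mul_re, Complex.exp_ofReal_mul_I_re, Complex.exp_ofReal_mul_I_im]
  have habs2 : z₀.re ^ 2 + z₀.im ^ 2 = r ^ 2 := by
    rw [hr, Complex.sq_norm, Complex.normSq_apply]; ring
  have hdivre : (v / z₀).re = ξ * Real.cos (θ - θ₁) / r := by
    rw [Complex.div_re, hvim, hvre, him, hre, Complex.normSq_apply]
    have h1 : z₀.re * z₀.re + z₀.im * z₀.im = r ^ 2 := by nlinarith [habs2]
    rw [h1, Real.cos_sub]
    field_simp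
  -- trig identity
  have key : Real.sin θ - 2 * Real.sin θ₁ * Real.cos (θ - θ₁) = Real.sin (θ - 2 * θ₁) := by
    have h1 := Real.sin_add (θ - θ₁) θ₁
    have h2 := Real.sin_sub (θ - θ₁) θ₁
    have e1 : θ - θ₁ + θ₁ = θ := by ring
    have e2 : θ - θ₁ - θ₁ = θ - 2 * θ₁ := by ring
    rw [e1] at h1; rw [e2] at h2
    linarith
  have heq : v.im / z₀.im - 2 * (v / z₀).re = ξ * Real.sin (θ - 2 * θ₁) / z₀.im := by
    rw [hvim, hdivre, him, ← key]
    have hs : Real.sin θ₁ ≠ 0 := ne_of_gt hsinθ₁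
    field_simp
  refine ⟨heq, ?_⟩
  rw [heq]
  -- positivity of sin(θ - 2θ₁)
  have hper : Real.sin (θ - 2 * θ₁) = Real.sin (θ - 2 * θ₁ + 2 * Real.pi) := by
    rw [Real.sin_add_two_pi]
  have hxpos : 0 < θ - 2 * θ₁ + 2 * Real.pi := by linarith
  have hxlt : θ - 2 * θ₁ + 2 * Real.pi < Real.pi := by linarith
  have hspos : 0 < Real.sin (θ - 2 * θ₁) := by
    rw [hper]
    exact Real.sin_pos_of_pos_of_lt_pi hxpos hxlt
  positivity
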